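/- Let L ∈ R^3 be nonzero and p₁, p₂, p₃ ∈ R^3 nonzero vectors each satisfying pᵢ·L ≥ 0. Then for every nonzero p in the convex hull (triangle) of {p₁, p₂, p₃}, ‖p × L‖/(‖p‖‖L‖) ≤ max over i of ‖pᵢ × L‖/(‖pᵢ‖‖L‖). -/

import Mathlib

open RealInnerProductSpace

noncomputable def cross3 (a b : EuclideanSpace ℝ (Fin 3)) : EuclideanSpace ℝ (Fin 3) :=
  (WithLp.equiv 2 (Fin 3 → ℝ)).symm
    ![a 1 * b 2 - a 2 * b 1, a 2 * b 0 - a 0 * b 2, a 0 * b 1 - a 1 * b 0]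

lemma inner3 (x y : EuclideanSpace ℝ (Fin 3)) :
    ⟪x, y⟫ = x 0 * y 0 + x 1 * y 1 + x 2 * y 2 := by
  simp [PiLp.inner_apply, Fin.sum_univ_three, RCLike.inner_apply, mul_comm]

lemma norm3 (x : EuclideanSpace ℝ (Fin 3)) :
    ‖x‖^2 = x 0^2 + x 1^2 + x 2^2 := by
  rw [← real_inner_self_eq_norm_sq, inner3]; ring

lemma cross3_norm_sq (a b : EuclideanSpace ℝ (Fin 3)) :
    ‖cross3 a b‖^2 = ‖a‖^2 * ‖b‖^2 - ⟪a, b⟫^2 := by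
  rw [norm3, norm3, norm3, inner3]
  simp only [cross3, WithLp.equiv_symm_apply, PiLp.toLp_apply, Matrix.cons_val_zero, Matrix.cons_val_one,
    Matrix.head_cons, Matrix.cons_val_two, Matrix.tail_cons]
  ring

lemma key (L p q : EuclideanSpace ℝ (Fin 3)) (hL : L ≠ 0) (hp : p ≠ 0) (hq : q ≠ 0)
    (hq0 : 0 ≤ ⟪q, L⟫) (h : ⟪q, L⟫ / ‖q‖ * ‖p‖ ≤ ⟪p, L⟫) :
    ‖cross3 p L‖ / (‖p‖ * ‖L‖) ≤ ‖cross3 q L‖ / (‖q‖ * ‖L‖) := by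
  have hnp : (0:ℝ) < ‖p‖ := norm_pos_iff.mpr hp
  have hnq : (0:ℝ) < ‖q‖ := norm_pos_iff.mpr hq
  have hnL : (0:ℝ) < ‖L‖ := norm_pos_iff.mpr hL
  have h' : ⟪q, L⟫ * ‖p‖ ≤ ⟪p, L⟫ * ‖q‖ := by
    rw [div_mul_eq_mul_div, div_le_iff₀ hnq] at h; linarith
  rw [div_le_div_iff₀ (by positivity) (by positivity)]
  have hA := cross3_norm_sq p L
  have hB := cross3_norm_sq q L
  have hA0 : (0:ℝ) ≤ ‖cross3 p L‖ := norm_nonneg _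
  have hB0 : (0:ℝ) ≤ ‖cross3 q L‖ := norm_nonneg _
  have hsq : (‖cross3 p L‖ * (‖q‖ * ‖L‖))^2 ≤ (‖cross3 q L‖ * (‖p‖ * ‖L‖))^2 := by
    have hip : 0 ≤ ⟪p, L⟫ := le_trans (mul_nonneg (div_nonneg hq0 hnq.le) hnp.le) h
    have hkey : ⟪q,L⟫^2 * ‖p‖^2 ≤ ⟪p,L⟫^2 * ‖q‖^2 := by
      nlinarith [mul_nonneg hq0 hnp.le, mul_nonneg hip hnq.le]
    nlinarith [mul_le_mul_of_nonneg_right hkey (sq_nonneg ‖L‖)]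
  have := Real.sqrt_le_sqrt hsq
  rwa [Real.sqrt_sq (by positivity), Real.sqrt_sq (by positivity)] at this

theorem stmt11 (L p1 p2 p3 : EuclideanSpace ℝ (Fin 3))
    (hL : L ≠ 0) (hp1 : p1 ≠ 0) (hp2 : p2 ≠ 0) (hp3 : p3 ≠ 0)
    (h1 : 0 ≤ ⟪p1, L⟫) (h2 : 0 ≤ ⟪p2, L⟫) (h3 : 0 ≤ ⟪p3, L⟫) :
    ∀ p ∈ convexHull ℝ {p1, p2, p3}, p ≠ 0 →
      ‖cross3 p L‖ / (‖p‖ * ‖L‖) ≤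
        max (‖cross3 p1 L‖ / (‖p1‖ * ‖L‖))
          (max (‖cross3 p2 L‖ / (‖p2‖ * ‖L‖)) (‖cross3 p3 L‖ / (‖p3‖ * ‖L‖))) := by
  intro p hp hp0
  have hn1 : (0:ℝ) < ‖p1‖ := norm_pos_iff.mpr hp1
  have hn2 : (0:ℝ) < ‖p2‖ := norm_pos_iff.mpr hp2
  have hn3 : (0:ℝ) < ‖p3‖ := norm_pos_iff.mpr hp3
  set c : ℝ := min (⟪p1,L⟫/‖p1‖) (min (⟪p2,L⟫/‖p2‖) (⟪p3,L⟫/‖p3‖)) with hcdef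
  have hc0 : 0 ≤ c :=
    le_min (div_nonneg h1 hn1.le) (le_min (div_nonneg h2 hn2.le) (div_nonneg h3 hn3.le))
  have hK : Convex ℝ {x : EuclideanSpace ℝ (Fin 3) | c * ‖x‖ ≤ ⟪x, L⟫} := by
    intro x hx y hy a b ha hb hab
    simp only [Set.mem_setOf_eq] at hx hy ⊢
    have hle : ‖a • x + b • y‖ ≤ a * ‖x‖ + b * ‖y‖ := by
      calc ‖a • x + b • y‖ ≤ ‖a • x‖ + ‖b • y‖ := norm_add_le _ _
        _ = a * ‖x‖ + b * ‖y‖ := by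
            rw [norm_smul, norm_smul, Real.norm_of_nonneg ha, Real.norm_of_nonneg hb]
    calc c * ‖a • x + b • y‖ ≤ c * (a * ‖x‖ + b * ‖y‖) := by
          exact mul_le_mul_of_nonneg_left hle hc0
      _ = a * (c * ‖x‖) + b * (c * ‖y‖) := by ring
      _ ≤ a * ⟪x, L⟫ + b * ⟪y, L⟫ :=
          add_le_add (mul_le_mul_of_nonneg_left hx ha) (mul_le_mul_of_nonneg_left hy hb)
      _ = ⟪a • x + b • y, L⟫ := by
          rw [inner_add_left, real_inner_smul_left, real_inner_smul_left]
  have hmem : c * ‖p‖ ≤ ⟪p, L⟫ := by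
    have := convexHull_min ?_ hK hp
    · exact this
    · intro x hx
      simp only [Set.mem_insert_iff, Set.mem_singleton_iff] at hx
      rcases hx with rfl | rfl | rfl
      · exact (le_div_iff₀ hn1).mp (min_le_left _ _)
      · exact (le_div_iff₀ hn2).mp (le_trans (min_le_right _ _) (min_le_left _ _))
      · exact (le_div_iff₀ hn3).mp (le_trans (min_le_right _ _) (min_le_right _ _))
  rcases min_cases (⟪p1,L⟫/‖p1‖) (min (⟪p2,L⟫/‖p2‖) (⟪p3,L⟫/‖p3‖)) with ⟨he, _⟩ | ⟨he, _⟩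
  · refine le_trans (key L p p1 hL hp0 hp1 h1 ?_) (le_max_left _ _)
    rw [hcdef] at hmem; rw [he] at hmem; exact hmem
  · rcases min_cases (⟪p2,L⟫/‖p2‖) (⟪p3,L⟫/‖p3‖) with ⟨he2, _⟩ | ⟨he2, _⟩
    · refine le_trans (key L p p2 hL hp0 hp2 h2 ?_) (le_trans (le_max_left _ _) (le_max_right _ _))
      rw [hcdef, he, he2] at hmem; exact hmem
    · refine le_trans (key L p p3 hL hp0 hp3 h3 ?_) (le_trans (le_max_right _ _) (le_max_right _ _))
      rw [hcdef, he, he2] at hmem; exact hmem
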